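/- Let t* ≥ 0 and γ, ρ, c, η > 0. Let d, m^r, m^p, W : [t*, ∞) → ℝ be continuous with d(t*) = 0 and m^p(t*) = m^r(t*) > 0. Let t^p > t* be such that d(t)² ≤ γ·m^p(t) + (c/ρ)·W(t) for all t ∈ [t*, t^p], with equality at t = t^p (the performance-barrier trigger fires at t^p). Assume W(t) ≥ 0 for all t ∈ [t*, t^p], and assume m^p − m^r is differentiable on (t*, t^p) with (m^p − m^r)'(t) ≥ −η·(m^p(t) − m^r(t)). Then d(t^p)² ≥ γ·m^r(t^p); consequently the regular event time t^r := inf{ t ∈ (t*, ∞) : d(t)² ≥ γ·m^r(t) } satisfies t^r ≤ t^p. -/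

import Mathlib

open Set Real

/-- Lemma 2: if an event occurred at `t*` (so `d(t*) = 0`), the dynamic
variables start equal, the performance residual `W` is nonnegative, and the
performance-barrier trigger fires at `t^p`, then the regular trigger
`d² ≥ γ m^r` also holds at `t^p`; consequently the regular event time
`t^r = inf { t > t* : d(t)² ≥ γ m^r(t) }` satisfies `t^r ≤ t^p`. -/
theorem regular_event_no_later
    (tstar : ℝ) (htstar : 0 ≤ tstar)
    (γ ρ c η : ℝ) (hγ : 0 < γ) (hρ : 0 < ρ) (hc : 0 < c) (hη : 0 < η)
    (d mr mp W : ℝ → ℝ)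
    (hd_cont : ContinuousOn d (Ici tstar))
    (hmr_cont : ContinuousOn mr (Ici tstar))
    (hmp_cont : ContinuousOn mp (Ici tstar))
    (hW_cont : ContinuousOn W (Ici tstar))
    (hd0 : d tstar = 0)
    (hm_init_eq : mp tstar = mr tstar) (hm_init_pos : 0 < mr tstar)
    (tp : ℝ) (htp : tstar < tp)
    (htrig_le : ∀ s ∈ Icc tstar tp, (d s) ^ 2 ≤ γ * mp s + (c / ρ) * W s)
    (htrig_eq : (d tp) ^ 2 = γ * mp tp + (c / ρ) * W tp)
    (hW_nonneg : ∀ s ∈ Icc tstar tp, 0 ≤ W s)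
    (hdiff : ∀ s ∈ Ioo tstar tp, ∃ D : ℝ,
      HasDerivAt (fun x => mp x - mr x) D s ∧ -η * (mp s - mr s) ≤ D) :
    γ * mr tp ≤ (d tp) ^ 2 ∧
      sInf {s : ℝ | tstar < s ∧ γ * mr s ≤ (d s) ^ 2} ≤ tp := by
  -- Grönwall-type argument: g x = exp(η x) * (mp x - mr x) is monotone on [tstar, tp]
  set f : ℝ → ℝ := fun x => mp x - mr x with hf
  set g : ℝ → ℝ := fun x => Real.exp (η * x) * f x with hg
  have hIcc : Icc tstar tp ⊆ Ici tstar := Icc_subset_Ici_self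
  have hf_cont : ContinuousOn f (Icc tstar tp) :=
    ((hmp_cont.sub hmr_cont).mono hIcc)
  have hg_cont : ContinuousOn g (Icc tstar tp) :=
    (Real.continuous_exp.comp (continuous_const.mul continuous_id)).continuousOn.mul hf_cont
  have hint : interior (Icc tstar tp) = Ioo tstar tp := interior_Icc
  have hg_deriv : ∀ s, ∀ hs : s ∈ Ioo tstar tp,
      HasDerivAt g (Real.exp (η * s) * (η * f s + (Classical.choose (hdiff s hs)))) s := by
    intro s hs
    have hD := Classical.choose_spec (hdiff s hs)
    have h1 : HasDerivAt (fun x => Real.exp (η * x)) (Real.exp (η * s) * η) s := by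
      have := (Real.hasDerivAt_exp (η * s)).comp s ((hasDerivAt_id s).const_mul η)
      exact this.congr_deriv (by ring)
    have := h1.mul hD.1
    exact this.congr_deriv (by ring)
  have hg_mono : MonotoneOn g (Icc tstar tp) := by
    apply monotoneOn_of_deriv_nonneg (convex_Icc _ _) hg_cont
    · intro s hs
      rw [hint] at hs
      exact (hg_deriv s hs).differentiableAt.differentiableWithinAt
    · intro s hs
      rw [hint] at hs
      rw [(hg_deriv s hs).deriv]
      have hD := (Classical.choose_spec (hdiff s hs)).2
      have : 0 ≤ η * f s + Classical.choose (hdiff s hs) := by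
        have : -η * (mp s - mr s) ≤ Classical.choose (hdiff s hs) := hD
        simp only [hf]; linarith
      positivity
  have hg0 : g tstar = 0 := by
    simp [hg, hf, hm_init_eq]
  have hftp : 0 ≤ f tp := by
    have := hg_mono (left_mem_Icc.2 htp.le) (right_mem_Icc.2 htp.le) htp.le
    rw [hg0] at this
    have h2 : 0 ≤ Real.exp (η * tp) * f tp := by simpa [hg] using this
    have hexp : 0 < Real.exp (η * tp) := Real.exp_pos _
    nlinarith [h2, hexp]
  have hmr_le : mr tp ≤ mp tp := by simpa [hf, sub_nonneg] using hftp
  have hWtp : 0 ≤ W tp := hW_nonneg tp (right_mem_Icc.2 htp.le)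
  have main : γ * mr tp ≤ (d tp) ^ 2 := by
    rw [htrig_eq]
    have : 0 ≤ (c / ρ) * W tp := mul_nonneg (by positivity) hWtp
    nlinarith
  refine ⟨main, ?_⟩
  have hmem : tp ∈ {s : ℝ | tstar < s ∧ γ * mr s ≤ (d s) ^ 2} := ⟨htp, main⟩
  exact csInf_le ⟨tstar, fun s hs => hs.1.le⟩ hmem
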